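/- arXiv:2301.12003 — 3 statements merged into one kernel-verified Lean document; each statement's English description precedes it below -/
import Mathlib

section
/- (Proposition 1, time-averaged form.) Let f : ℝ^d × (0,1] → ℝ^d be measurable such that ω ↦ f(X_t(ω), t) is square-integrable for each t ∈ (0,1]. Then the degree of intersection averaged over t uniform on (0,1] is bounded by the weighted denoising loss: ∫₀¹ E‖(Z − X) − E[Z − X | 𝔪_t]‖² dt ≤ ∫₀¹ (1/t²)·E‖X − f(X_t, t)‖² dt. -/
open MeasureTheory

section Aux

variable {α : Type*} {m m0 : MeasurableSpace α}

variable {α : Type*} {m m0 : MeasurableSpace α}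

lemma memLp_two_condexp (hm : m ≤ m0) (μ : Measure α) [IsFiniteMeasure μ]
    {E : Type*} [NormedAddCommGroup E] [InnerProductSpace ℝ E] [CompleteSpace E]
    {f : α → E} (hf : MemLp f 2 μ) : MemLp (μ[f|m]) 2 μ := by
  haveI : SigmaFinite (μ.trim hm) := inferInstance
  set F := hf.toLp f with hF
  have hG2 : MemLp (condExpL2 E ℝ hm F : α → E) 2 μ := Lp.memLp _
  refine hG2.ae_eq ?_
  refine ae_eq_condExp_of_forall_setIntegral_eq hm (hf.integrable one_le_two)
    (fun s _ _ => (hG2.integrable one_le_two).integrableOn) (fun s hs hμs => ?_)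
    (aestronglyMeasurable_condExpL2 hm F)
  rw [integral_condExpL2_eq hm F hs hμs.ne]
  exact setIntegral_congr_ae (hm s hs) ((hf.coeFn_toLp).mono fun x hx _ => hx)

lemma integrable_mul_of_memLp_two (μ : Measure α) {h w : α → ℝ}
    (hh : MemLp h 2 μ) (hw : MemLp w 2 μ) :
    Integrable (fun x => h x * w x) μ := by
  have : (1 : ENNReal) / 1 = 1 / 2 + 1 / 2 := by
    rw [ENNReal.div_add_div_same]
    norm_num [ENNReal.div_self]
  have := hw.smul hh (r := 1)
  rw [memLp_one_iff_integrable] at this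
  exact this

lemma real_condexp_sq_le (hm : m ≤ m0) (μ : Measure α) [IsProbabilityMeasure μ]
    {w : α → ℝ} (hw : MemLp w 2 μ) :
    ∫ x, (w x - (μ[w|m]) x) ^ 2 ∂μ ≤ ∫ x, w x ^ 2 ∂μ := by
  haveI : SigmaFinite (μ.trim hm) := inferInstance
  set h := μ[w|m] with hh
  have hh2 : MemLp h 2 μ := memLp_two_condexp hm μ hw
  have hw1 : Integrable w μ := hw.integrable one_le_two
  have hmul : Integrable (fun x => h x * w x) μ := integrable_mul_of_memLp_two μ hh2 hw
  have hsq : Integrable (fun x => h x * h x) μ := integrable_mul_of_memLp_two μ hh2 hh2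
  have key : ∫ x, h x * w x ∂μ = ∫ x, h x * h x ∂μ := by
    have hpull : μ[(fun x => h x * w x)|m] =ᵐ[μ] fun x => h x * (μ[w|m]) x :=
      condExp_mul_of_stronglyMeasurable_left stronglyMeasurable_condExp hmul hw1
    calc ∫ x, h x * w x ∂μ = ∫ x, (μ[(fun x => h x * w x)|m]) x ∂μ :=
          (integral_condExp hm).symm
    _ = ∫ x, h x * h x ∂μ := integral_congr_ae hpull
  have hexp : ∀ x, (w x - h x) ^ 2 = w x ^ 2 - 2 * (h x * w x) + h x * h x := by
    intro x; ring
  have hw2 : Integrable (fun x => w x ^ 2) μ := hw.integrable_sq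
  have h1 : ∫ x, (w x - h x) ^ 2 ∂μ
      = ∫ x, w x ^ 2 ∂μ - 2 * ∫ x, h x * w x ∂μ + ∫ x, h x * h x ∂μ := by
    simp_rw [hexp]
    rw [integral_add ((hw2.sub (hmul.const_mul 2)).congr (by filter_upwards with x; simp)) hsq,
      integral_sub hw2 (hmul.const_mul 2), integral_const_mul]
  have hnn : 0 ≤ ∫ x, h x * h x ∂μ := integral_nonneg fun x => mul_self_nonneg _
  rw [h1, key]
  linarith


lemma condexp_euclidean_apply (hm : m ≤ m0) (μ : Measure α) [IsFiniteMeasure μ]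
    {d : ℕ} {W : α → EuclideanSpace ℝ (Fin d)} (hW : Integrable W μ) (i : Fin d) :
    (fun x => (μ[W|m]) x i) =ᵐ[μ] μ[(fun x => W x i)|m] := by
  haveI : SigmaFinite (μ.trim hm) := inferInstance
  have hproj := (EuclideanSpace.proj i : EuclideanSpace ℝ (Fin d) →L[ℝ] ℝ)
  refine ae_eq_condExp_of_forall_setIntegral_eq hm
    ((EuclideanSpace.proj i : EuclideanSpace ℝ (Fin d) →L[ℝ] ℝ).integrable_comp hW)
    (fun s _ _ => ((EuclideanSpace.proj i : EuclideanSpace ℝ (Fin d) →L[ℝ] ℝ).integrable_comp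
      (integrable_condExp (f := W))).integrableOn)
    (fun s hs hμs => ?_)
    (StronglyMeasurable.aestronglyMeasurable
      ((EuclideanSpace.proj i : EuclideanSpace ℝ (Fin d) →L[ℝ] ℝ).continuous.comp_stronglyMeasurable
        stronglyMeasurable_condExp))
  have h1 : ∫ x in s, (EuclideanSpace.proj i : EuclideanSpace ℝ (Fin d) →L[ℝ] ℝ) ((μ[W|m]) x) ∂μ
      = (EuclideanSpace.proj i : EuclideanSpace ℝ (Fin d) →L[ℝ] ℝ) (∫ x in s, (μ[W|m]) x ∂μ) :=
    (EuclideanSpace.proj i : EuclideanSpace ℝ (Fin d) →L[ℝ] ℝ).integral_comp_comm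
      (integrable_condExp.integrableOn)
  have h2 : ∫ x in s, (EuclideanSpace.proj i : EuclideanSpace ℝ (Fin d) →L[ℝ] ℝ) (W x) ∂μ
      = (EuclideanSpace.proj i : EuclideanSpace ℝ (Fin d) →L[ℝ] ℝ) (∫ x in s, W x ∂μ) :=
    (EuclideanSpace.proj i : EuclideanSpace ℝ (Fin d) →L[ℝ] ℝ).integral_comp_comm
      hW.integrableOn
  show ∫ x in s, (EuclideanSpace.proj i : EuclideanSpace ℝ (Fin d) →L[ℝ] ℝ) ((μ[W|m]) x) ∂μ
      = ∫ x in s, (EuclideanSpace.proj i : EuclideanSpace ℝ (Fin d) →L[ℝ] ℝ) (W x) ∂μ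
  rw [h1, h2, setIntegral_condExp hm hW hs]

lemma euclidean_norm_sq {d : ℕ} (y : EuclideanSpace ℝ (Fin d)) :
    ‖y‖ ^ 2 = ∑ i, (y i) ^ 2 := by
  rw [EuclideanSpace.norm_eq, Real.sq_sqrt (by positivity)]
  simp [Real.norm_eq_abs, sq_abs]

lemma vec_condexp_sq_le (hm : m ≤ m0) (μ : Measure α) [IsProbabilityMeasure μ]
    {d : ℕ} {W : α → EuclideanSpace ℝ (Fin d)} (hW : MemLp W 2 μ) :
    ∫ x, ‖W x - (μ[W|m]) x‖ ^ 2 ∂μ ≤ ∫ x, ‖W x‖ ^ 2 ∂μ := by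
  haveI : SigmaFinite (μ.trim hm) := inferInstance
  set V := μ[W|m] with hV
  have hV2 : MemLp V 2 μ := memLp_two_condexp hm μ hW
  have hWint : Integrable W μ := hW.integrable one_le_two
  have hwi : ∀ i : Fin d, MemLp (fun x => W x i) 2 μ := fun i =>
    (EuclideanSpace.proj i : EuclideanSpace ℝ (Fin d) →L[ℝ] ℝ).comp_memLp' hW
  have hVi : ∀ i : Fin d, MemLp (fun x => V x i) 2 μ := fun i =>
    (EuclideanSpace.proj i : EuclideanSpace ℝ (Fin d) →L[ℝ] ℝ).comp_memLp' hV2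
  have hL : ∫ x, ‖W x - V x‖ ^ 2 ∂μ = ∑ i, ∫ x, (W x i - V x i) ^ 2 ∂μ := by
    rw [← integral_finset_sum _ (fun i (_ : i ∈ Finset.univ) =>
      show Integrable (fun x => (W x i - V x i) ^ 2) μ from
        (((hwi i).sub (hVi i)).integrable_sq).congr
          (by filter_upwards with x; simp [Pi.sub_apply]))]
    refine integral_congr_ae (Filter.Eventually.of_forall fun x => ?_)
    show ‖W x - V x‖ ^ 2 = ∑ i, (W x i - V x i) ^ 2
    rw [euclidean_norm_sq]
    rfl
  have hR : ∫ x, ‖W x‖ ^ 2 ∂μ = ∑ i, ∫ x, (W x i) ^ 2 ∂μ := by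
    rw [← integral_finset_sum _ (fun i (_ : i ∈ Finset.univ) =>
      show Integrable (fun x => (W x i) ^ 2) μ from (hwi i).integrable_sq)]
    refine integral_congr_ae (Filter.Eventually.of_forall fun x => ?_)
    show ‖W x‖ ^ 2 = ∑ i, (W x i) ^ 2
    exact euclidean_norm_sq _
  rw [hL, hR]
  refine Finset.sum_le_sum fun i _ => ?_
  have hcomp : (fun x => (W x i - V x i) ^ 2)
      =ᵐ[μ] fun x => (W x i - (μ[(fun x => W x i)|m]) x) ^ 2 := by
    filter_upwards [condexp_euclidean_apply hm μ hWint i] with x hx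
    rw [hV, hx]
  rw [integral_congr_ae hcomp]
  exact real_condexp_sq_le hm μ (hwi i)

end Aux


/-- **Proposition 1, time-averaged form.** Let `f : ℝ^d × (0,1] → ℝ^d` be
measurable such that `ω ↦ f(X_t(ω), t)` is square-integrable for each `t ∈ (0,1]`. Then the
degree of intersection averaged over `t` uniform on `(0,1]` is bounded by the weighted
denoising loss:
`∫₀¹ E‖(Z − X) − E[Z − X | 𝔪_t]‖² dt ≤ ∫₀¹ (1/t²)·E‖X − f(X_t, t)‖² dt`
(both sides are nonnegative; the integrals over `t` are taken in `ℝ≥0∞`). -/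
theorem avg_degree_of_intersection_le_weighted_denoising_loss
    {Ω : Type*} [MeasurableSpace Ω] (P : Measure Ω) [IsProbabilityMeasure P]
    (d : ℕ) (hd : 1 ≤ d)
    (X Z : Ω → EuclideanSpace ℝ (Fin d)) (hX : Measurable X) (hZ : Measurable Z)
    (hX2 : MemLp X 2 P) (hZ2 : MemLp Z 2 P)
    (f : EuclideanSpace ℝ (Fin d) → ℝ → EuclideanSpace ℝ (Fin d))
    (hf : Measurable (Function.uncurry f))
    (hf2 : ∀ t ∈ Set.Ioc (0 : ℝ) 1,
      MemLp (fun ω => f ((1 - t) • X ω + t • Z ω) t) 2 P) :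
    ∫⁻ t in Set.Ioc (0 : ℝ) 1,
        ENNReal.ofReal (∫ ω, ‖(Z ω - X ω) -
          (P[(fun ω' => Z ω' - X ω') |
            MeasurableSpace.comap (fun ω' => (1 - t) • X ω' + t • Z ω') inferInstance]) ω‖ ^ 2 ∂P)
      ≤ ∫⁻ t in Set.Ioc (0 : ℝ) 1,
        ENNReal.ofReal ((1 / t ^ 2) *
          ∫ ω, ‖X ω - f ((1 - t) • X ω + t • Z ω) t‖ ^ 2 ∂P) := by
  refine lintegral_mono_ae ((ae_restrict_mem measurableSet_Ioc).mono fun t ht => ?_)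
  obtain ⟨ht0, ht1⟩ := ht
  set Xt : Ω → EuclideanSpace ℝ (Fin d) := fun ω => (1 - t) • X ω + t • Z ω with hXtdef
  have hXtmeas : Measurable Xt := (hX.const_smul (1 - t)).add (hZ.const_smul t)
  set m := MeasurableSpace.comap Xt inferInstance with hmdef
  have hm : m ≤ _ := hXtmeas.comap_le
  haveI : SigmaFinite (P.trim hm) := inferInstance
  have hXtm : @Measurable _ _ m _ Xt := Measurable.of_comap_le le_rfl
  have hXt2 : MemLp Xt 2 P := (hX2.const_smul (1 - t)).add (hZ2.const_smul t)
  have hXt1 : Integrable Xt P := hXt2.integrable one_le_two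
  have hX1 : Integrable X P := hX2.integrable one_le_two
  set g : Ω → EuclideanSpace ℝ (Fin d) := fun ω => f (Xt ω) t with hgdef
  have hg2 : MemLp g 2 P := hf2 t ⟨ht0, ht1⟩
  have hg1 : Integrable g P := hg2.integrable one_le_two
  have hgm : StronglyMeasurable[m] g :=
    ((hf.comp (measurable_id.prodMk measurable_const)).comp hXtm).stronglyMeasurable
  have ht0' : t ≠ 0 := ne_of_gt ht0
  have hrepr : (fun ω => Z ω - X ω) = t⁻¹ • Xt - t⁻¹ • X := by
    funext ω
    simp only [Pi.sub_apply, Pi.smul_apply, hXtdef]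
    match_scalars <;> field_simp <;> ring
  have hsub : P[(fun ω' => Z ω' - X ω')|m]
      =ᵐ[P] fun ω => t⁻¹ • Xt ω - t⁻¹ • (P[X|m]) ω := by
    rw [hrepr]
    have h1 : Integrable (t⁻¹ • Xt) P := hXt1.smul t⁻¹
    have h2 : Integrable (t⁻¹ • X) P := hX1.smul t⁻¹
    have hXtc : P[Xt|m] = Xt :=
      condExp_of_stronglyMeasurable hm hXtm.stronglyMeasurable hXt1
    filter_upwards [condExp_sub h1 h2 (m := m),
      condExp_smul (μ := P) (m := m) t⁻¹ Xt, condExp_smul (μ := P) (m := m) t⁻¹ X]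
      with ω hω h1' h2'
    rw [hω, Pi.sub_apply, h1', h2', hXtc]
    rfl
  have hpt : ∀ᵐ ω ∂P, ‖(Z ω - X ω) - (P[(fun ω' => Z ω' - X ω')|m]) ω‖ ^ 2
      = (1 / t ^ 2) * ‖X ω - (P[X|m]) ω‖ ^ 2 := by
    filter_upwards [hsub] with ω hω
    have hz : Z ω - X ω = t⁻¹ • Xt ω - t⁻¹ • X ω := congrFun hrepr ω
    rw [hω, hz]
    have hvec : (t⁻¹ • Xt ω - t⁻¹ • X ω) - (t⁻¹ • Xt ω - t⁻¹ • (P[X|m]) ω)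
        = t⁻¹ • ((P[X|m]) ω - X ω) := by module
    rw [hvec, norm_smul, norm_sub_rev, mul_pow, Real.norm_eq_abs, sq_abs, inv_pow, one_div]
  have hL : ∫ ω, ‖(Z ω - X ω) - (P[(fun ω' => Z ω' - X ω')|m]) ω‖ ^ 2 ∂P
      = (1 / t ^ 2) * ∫ ω, ‖X ω - (P[X|m]) ω‖ ^ 2 ∂P := by
    rw [integral_congr_ae hpt, integral_const_mul]
  have hW2 : MemLp (X - g) 2 P := hX2.sub hg2
  have hid : ∀ᵐ ω ∂P, X ω - (P[X|m]) ω = (X - g) ω - (P[X - g|m]) ω := by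
    have hgc : P[g|m] = g := condExp_of_stronglyMeasurable hm hgm hg1
    filter_upwards [condExp_sub hX1 hg1 (m := m)] with ω hω
    simp only [Pi.sub_apply, hω, hgc]
    abel
  have hmain : ∫ ω, ‖X ω - (P[X|m]) ω‖ ^ 2 ∂P ≤ ∫ ω, ‖X ω - g ω‖ ^ 2 ∂P := by
    calc ∫ ω, ‖X ω - (P[X|m]) ω‖ ^ 2 ∂P
        = ∫ ω, ‖(X - g) ω - (P[X - g|m]) ω‖ ^ 2 ∂P :=
          integral_congr_ae (hid.mono fun ω h => congrArg (fun v => ‖v‖ ^ 2) h)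
      _ ≤ ∫ ω, ‖(X - g) ω‖ ^ 2 ∂P := vec_condexp_sq_le hm P hW2
      _ = ∫ ω, ‖X ω - g ω‖ ^ 2 ∂P := rfl
  refine ENNReal.ofReal_le_ofReal ?_
  rw [hL]
  exact mul_le_mul_of_nonneg_left hmain (by positivity)
end

section
/- If the forward trajectories have zero degree of intersection at time t ∈ (0,1], i.e. E‖(Z − X) − E[Z − X | 𝔪_t]‖² = 0, then the posterior of the data given the interpolated point is degenerate: X = E[X | 𝔪_t] almost surely (so X is determined by X_t, i.e. the conditional distribution of X given X_t is a Dirac mass), and likewise Z = E[Z | 𝔪_t] almost surely. -/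
open MeasureTheory

lemma memLp_two_condexp_aux {Ω : Type*} {m m0 : MeasurableSpace Ω} (hm : m ≤ m0)
    (P : Measure Ω) [IsFiniteMeasure P] {d : ℕ}
    {f : Ω → EuclideanSpace ℝ (Fin d)} (hf : MemLp f 2 P) :
    MemLp (P[f|m]) 2 P := by
  haveI : SigmaFinite (P.trim hm) := inferInstance
  set g : Lp (EuclideanSpace ℝ (Fin d)) 2 P :=
    (condExpL2 (EuclideanSpace ℝ (Fin d)) ℝ hm (hf.toLp f) : Lp (EuclideanSpace ℝ (Fin d)) 2 P)
  have hgf : (g : Ω → EuclideanSpace ℝ (Fin d)) =ᵐ[P] P[f|m] := by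
    refine ae_eq_condExp_of_forall_setIntegral_eq hm (hf.integrable one_le_two) ?_ ?_ ?_
    · intro s _ _
      exact integrableOn_Lp_of_measure_ne_top g (by norm_num) (measure_ne_top P s)
    · intro s hs hμs
      have h1 := integral_condExpL2_eq (𝕜 := ℝ) hm (hf.toLp f) hs hμs.ne
      rw [h1]
      exact setIntegral_congr_ae (hm s hs) ((hf.coeFn_toLp).mono fun x hx _ => hx)
    · exact lpMeas.aestronglyMeasurable _
  exact (Lp.memLp g).ae_eq hgf


/-- If the forward trajectories have zero degree of intersection at time
`t ∈ (0,1]`, i.e. `E‖(Z − X) − E[Z − X | 𝔪_t]‖² = 0`, then the posterior of the data given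
the interpolated point is degenerate: `X = E[X | 𝔪_t]` almost surely, and likewise
`Z = E[Z | 𝔪_t]` almost surely. -/
theorem zero_intersection_implies_degenerate_posterior
    {Ω : Type*} [MeasurableSpace Ω] (P : Measure Ω) [IsProbabilityMeasure P]
    (d : ℕ) (hd : 1 ≤ d)
    (X Z : Ω → EuclideanSpace ℝ (Fin d)) (hX : Measurable X) (hZ : Measurable Z)
    (hX2 : MemLp X 2 P) (hZ2 : MemLp Z 2 P)
    (t : ℝ) (ht : t ∈ Set.Ioc (0 : ℝ) 1)
    (Xt : Ω → EuclideanSpace ℝ (Fin d)) (hXt : Xt = fun ω => (1 - t) • X ω + t • Z ω)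
    (mt : MeasurableSpace Ω) (hmt : mt = MeasurableSpace.comap Xt inferInstance)
    (hI : ∫ ω, ‖(Z ω - X ω) - (P[(fun ω' => Z ω' - X ω') | mt]) ω‖ ^ 2 ∂P = 0) :
    X =ᵐ[P] P[X | mt] ∧ Z =ᵐ[P] P[Z | mt] := by
  rename_i m0 hprob
  have hXtm : @Measurable Ω _ m0 _ Xt := by
    rw [hXt]; exact (hX.const_smul (1 - t)).add (hZ.const_smul t)
  have hle : mt ≤ m0 := hmt ▸ hXtm.comap_le
  set W : Ω → EuclideanSpace ℝ (Fin d) := fun ω => Z ω - X ω with hWdef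
  have hW2 : MemLp W 2 P := hZ2.sub hX2
  have hW1 : Integrable W P := hW2.integrable one_le_two
  have hC2 : MemLp (P[W|mt]) 2 P := memLp_two_condexp_aux hle P hW2
  have hdiff2 : MemLp (fun ω => W ω - (P[W|mt]) ω) 2 P := hW2.sub hC2
  have hint : Integrable (fun ω => ‖W ω - (P[W|mt]) ω‖ ^ 2) P :=
    (memLp_two_iff_integrable_sq_norm hdiff2.aestronglyMeasurable).mp hdiff2
  have h0 : (fun ω => ‖W ω - (P[W|mt]) ω‖ ^ 2) =ᵐ[P] 0 :=
    (integral_eq_zero_iff_of_nonneg (fun ω => by positivity) hint).mp hI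
  have hWae : W =ᵐ[P] P[W|mt] := by
    filter_upwards [h0] with ω hω
    have : ‖W ω - (P[W|mt]) ω‖ = 0 := by
      have := hω
      simp only [Pi.zero_apply] at this
      nlinarith [norm_nonneg (W ω - (P[W|mt]) ω)]
    exact sub_eq_zero.mp (norm_eq_zero.mp this)
  have hXtsm : StronglyMeasurable[mt] Xt := by
    refine Measurable.stronglyMeasurable ?_
    rw [hmt]; exact measurable_iff_comap_le.mpr le_rfl
  have hXt2 : MemLp Xt 2 P := by
    rw [hXt]; exact (hX2.const_smul (1 - t)).add (hZ2.const_smul t)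
  have hXt1 : Integrable Xt P := hXt2.integrable one_le_two
  have hXtc : P[Xt|mt] = Xt := condExp_of_stronglyMeasurable hle hXtsm hXt1
  have hXeq : X = Xt - t • W := by
    funext ω
    rw [hXt]
    simp only [Pi.sub_apply, Pi.smul_apply, hWdef]
    module
  have hZeq : Z = Xt + (1 - t) • W := by
    funext ω
    rw [hXt]
    simp only [Pi.add_apply, Pi.smul_apply, hWdef]
    module
  constructor
  · have hsub := condExp_sub (μ := P) (m := mt) hXt1 (hW1.smul t)
    have hsm := condExp_smul (μ := P) (m := mt) t W
    filter_upwards [hWae, hsub, hsm] with ω h1 h2 h3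
    rw [hXeq]
    simp only [Pi.sub_apply, Pi.smul_apply] at h2 h3 ⊢
    rw [h2, hXtc, h3]
    simp [h1]
  · have hadd := condExp_add (μ := P) (m := mt) hXt1 (hW1.smul (1 - t))
    have hsm := condExp_smul (μ := P) (m := mt) (1 - t) W
    filter_upwards [hWae, hadd, hsm] with ω h1 h2 h3
    rw [hZeq]
    simp only [Pi.add_apply, Pi.smul_apply] at h2 h3 ⊢
    rw [h2, hXtc, h3]
    simp [h1]
end

section
/- (Upper bound on the aggregated-posterior KL via a Gaussian decoder.) Let μ be a probability measure on ℝ^d with a strictly positive density f with respect to Lebesgue measure, p a probability measure on ℝ^k, κ a Markov kernel from ℝ^d to ℝ^k with aggregated posterior q_Z := ∫ κ(x) dμ(x), and let x_ψ : ℝ^k → ℝ^d be measurable and σ > 0. Assume κ(x) ≪ p for μ-a.e. x, the mutual information I(X;Z) = D_KL(μ ⊗ κ ‖ μ × q_Z) is finite, and the expectations below are finite. Then D_KL(q_Z ‖ p) ≤ (1/(2σ²))·∫∫ ‖x_ψ(z) − x‖² dκ(x)(z) dμ(x) + (d/2)·log(2πσ²) + ∫ log f(x) dμ(x) + ∫ D_KL(κ(x)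 ‖ p) dμ(x). -/
open MeasureTheory ProbabilityTheory
open scoped ENNReal Classical

/-- The Kullback–Leibler divergence `∫ log(dν/dρ) dν`, valued in `EReal`, taken to be `+∞`
when `ν` is not absolutely continuous with respect to `ρ` (or when the log-likelihood ratio
is not integrable). -/
noncomputable def klDiv {α : Type*} [MeasurableSpace α] (ν ρ : Measure α) : EReal :=
  if ν ≪ ρ ∧ Integrable (fun x => Real.log (ν.rnDeriv ρ x).toReal) ν
  then ((∫ x, Real.log (ν.rnDeriv ρ x).toReal ∂ν : ℝ) : EReal)
  else ⊤

section helpers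

lemma gauss_integrable (d : ℕ) (σ : ℝ) (hσ : 0 < σ) (c : EuclideanSpace ℝ (Fin d)) :
    Integrable (fun x : EuclideanSpace ℝ (Fin d) => Real.exp (-(‖c - x‖^2 / (2*σ^2)))) := by
  have hb : (0:ℝ) < (2*σ^2)⁻¹ := by positivity
  have h1 : Integrable (fun v : EuclideanSpace ℝ (Fin d) =>
      Complex.exp (-(((2*σ^2)⁻¹:ℝ):ℂ) * ‖v‖^2
        + 0 * ((inner ℝ (0 : EuclideanSpace ℝ (Fin d)) v : ℝ) : ℂ))) :=
    GaussianFourier.integrable_cexp_neg_mul_sq_norm_add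
      (by simp only [Complex.ofReal_re]; exact hb) 0 0
  have h2 : Integrable (fun v : EuclideanSpace ℝ (Fin d) => Real.exp (-(2*σ^2)⁻¹ * ‖v‖^2)) := by
    have h := h1.re
    refine h.congr (Filter.Eventually.of_forall fun v => ?_)
    show RCLike.re (Complex.exp (-(((2*σ^2)⁻¹:ℝ):ℂ) * ‖v‖^2
        + 0 * ((inner ℝ (0 : EuclideanSpace ℝ (Fin d)) v : ℝ) : ℂ)))
      = Real.exp (-(2*σ^2)⁻¹ * ‖v‖^2)
    rw [show (-(((2*σ^2)⁻¹:ℝ):ℂ) * (‖v‖:ℂ)^2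
        + 0 * ((inner ℝ (0 : EuclideanSpace ℝ (Fin d)) v : ℝ) : ℂ))
        = ((-(2*σ^2)⁻¹ * ‖v‖^2 : ℝ) : ℂ) by push_cast; ring]
    simp only [RCLike.re_to_complex]
    exact Complex.exp_ofReal_re _
  have h3 := h2.comp_sub_right c
  refine h3.congr (Filter.Eventually.of_forall fun v => ?_)
  show Real.exp (-(2*σ^2)⁻¹ * ‖v - c‖^2) = Real.exp (-(‖c - v‖^2 / (2*σ^2)))
  rw [norm_sub_rev v c]
  congr 1
  field_simp

lemma gauss_integral (d : ℕ) (σ : ℝ) (hσ : 0 < σ) (c : EuclideanSpace ℝ (Fin d)) :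
    ∫ x : EuclideanSpace ℝ (Fin d), Real.exp (-(‖c - x‖^2 / (2*σ^2)))
      = (2*Real.pi*σ^2) ^ ((d:ℝ)/2) := by
  have hb : (0:ℝ) < (2*σ^2)⁻¹ := by positivity
  have h4 := integral_sub_right_eq_self (μ := volume)
    (fun y : EuclideanSpace ℝ (Fin d) => Real.exp (-(2*σ^2)⁻¹ * ‖y‖^2)) c
  calc ∫ x : EuclideanSpace ℝ (Fin d), Real.exp (-(‖c - x‖^2 / (2*σ^2)))
      = ∫ x : EuclideanSpace ℝ (Fin d), Real.exp (-(2*σ^2)⁻¹ * ‖x - c‖^2) := by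
        congr 1; funext x; rw [norm_sub_rev c x]; congr 1; field_simp
    _ = ∫ y : EuclideanSpace ℝ (Fin d), Real.exp (-(2*σ^2)⁻¹ * ‖y‖^2) := h4
    _ = (2*Real.pi*σ^2) ^ ((d:ℝ)/2) := by
        rw [GaussianFourier.integral_rexp_neg_mul_sq_norm hb, finrank_euclideanSpace_fin]
        congr 1
        field_simp

lemma negpart_llr_bound {β : Type*} [MeasurableSpace β] (ν pr : Measure β)
    [IsProbabilityMeasure ν] [IsProbabilityMeasure pr] (hνπ : ν ≪ pr) :
    ∫⁻ z, ENNReal.ofReal (-(Real.log ((ν.rnDeriv pr z).toReal))) ∂ν ≤ 1 := by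
  have key : ∀ g : β → ℝ≥0∞, Measurable g →
      ∫⁻ z, g z ∂ν = ∫⁻ z, ν.rnDeriv pr z * g z ∂pr := by
    intro g hg
    conv_lhs => rw [← Measure.withDensity_rnDeriv_eq ν pr hνπ]
    rw [lintegral_withDensity_eq_lintegral_mul _ (Measure.measurable_rnDeriv ν pr) hg]
    rfl
  rw [key _ (by exact (Measure.measurable_rnDeriv ν pr).ennreal_toReal.log.neg.ennreal_ofReal)]
  calc ∫⁻ z, (ν.rnDeriv pr z) * ENNReal.ofReal (-(Real.log ((ν.rnDeriv pr z).toReal))) ∂pr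
      ≤ ∫⁻ _, 1 ∂pr := by
        refine lintegral_mono_ae ?_
        filter_upwards [Measure.rnDeriv_ne_top ν pr] with z hz
        set r := (ν.rnDeriv pr z).toReal with hr
        have hr0 : 0 ≤ r := ENNReal.toReal_nonneg
        rw [show ν.rnDeriv pr z = ENNReal.ofReal r by rw [hr, ENNReal.ofReal_toReal hz]]
        rw [← ENNReal.ofReal_mul hr0]
        refine ENNReal.ofReal_le_of_le_toReal ?_
        rw [ENNReal.toReal_one]
        rcases le_or_gt r 0 with h | h
        · have : r = 0 := le_antisymm h hr0
          simp [this]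
        · have h5 : Real.log r⁻¹ ≤ r⁻¹ - 1 := Real.log_le_sub_one_of_pos (by positivity)
          rw [Real.log_inv] at h5
          have h6 : r * (-Real.log r) ≤ r * (r⁻¹ - 1) :=
            mul_le_mul_of_nonneg_left h5 hr0
          have h7 : r * (r⁻¹ - 1) = 1 - r := by field_simp
          nlinarith
    _ = 1 := by simp

lemma lintegral_ofReal_le_of_integrable {β : Type*} [MeasurableSpace β] (ν : Measure β)
    (g : β → ℝ) (hg : Integrable g ν) :
    ∫⁻ z, ENNReal.ofReal (g z) ∂ν
      ≤ ENNReal.ofReal (∫ z, g z ∂ν) + ∫⁻ z, ENNReal.ofReal (-(g z)) ∂ν := by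
  have hA : ∫⁻ z, ENNReal.ofReal (g z) ∂ν ≠ ⊤ := by
    refine ne_top_of_le_ne_top hg.2.ne (lintegral_mono fun z => ?_)
    exact Real.ofReal_le_enorm _
  have hB : ∫⁻ z, ENNReal.ofReal (-(g z)) ∂ν ≠ ⊤ := by
    refine ne_top_of_le_ne_top hg.2.ne (lintegral_mono fun z => ?_)
    rw [← enorm_neg]
    exact Real.ofReal_le_enorm _
  have key := integral_eq_lintegral_pos_part_sub_lintegral_neg_part hg
  have h1 : (∫⁻ z, ENNReal.ofReal (g z) ∂ν).toReal
      = (∫ z, g z ∂ν) + (∫⁻ z, ENNReal.ofReal (-(g z)) ∂ν).toReal := by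
    rw [key]; ring
  calc ∫⁻ z, ENNReal.ofReal (g z) ∂ν
      = ENNReal.ofReal ((∫⁻ z, ENNReal.ofReal (g z) ∂ν).toReal) :=
        (ENNReal.ofReal_toReal hA).symm
    _ = ENNReal.ofReal ((∫ z, g z ∂ν) + (∫⁻ z, ENNReal.ofReal (-(g z)) ∂ν).toReal) := by
        rw [h1]
    _ ≤ ENNReal.ofReal (∫ z, g z ∂ν)
        + ENNReal.ofReal ((∫⁻ z, ENNReal.ofReal (-(g z)) ∂ν).toReal) := ENNReal.ofReal_add_le
    _ = _ := by rw [ENNReal.ofReal_toReal hB]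

end helpers

/-- **Upper bound on the aggregated-posterior KL via a Gaussian decoder.**
Let `μ` be a probability measure on `ℝ^d` with strictly positive density `f` with respect
to Lebesgue measure, `p` a prior on `ℝ^k`, `κ` a Markov kernel (encoder) with aggregated
posterior `q_Z` (the second marginal of `μ ⊗ κ`), `x_ψ : ℝ^k → ℝ^d` a measurable decoder
mean, and `σ > 0`. Under absolute continuity `κ x ≪ p` (μ-a.e.), finite mutual information
`I(X;Z) = D_KL(μ ⊗ κ ‖ μ × q_Z)`, and finiteness of the expectations involved,
`D_KL(q_Z ‖ p) ≤ (1/(2σ²))·∫∫ ‖x_ψ(z) − x‖² dκ(x)(z) dμ(x) + (d/2)·log(2πσ²)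
  + ∫ log f dμ + ∫ D_KL(κ(x) ‖ p) dμ(x)`. -/
theorem klDiv_aggregated_posterior_le_gaussian_decoder_bound
    (d k : ℕ)
    (μ : Measure (EuclideanSpace ℝ (Fin d))) [IsProbabilityMeasure μ]
    (f : EuclideanSpace ℝ (Fin d) → ℝ) (hf_meas : Measurable f) (hf_pos : ∀ x, 0 < f x)
    (hμ : μ = MeasureTheory.volume.withDensity (fun x => ENNReal.ofReal (f x)))
    (p : Measure (EuclideanSpace ℝ (Fin k))) [IsProbabilityMeasure p]
    (κ : Kernel (EuclideanSpace ℝ (Fin d)) (EuclideanSpace ℝ (Fin k))) [IsMarkovKernel κ]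
    (qZ : Measure (EuclideanSpace ℝ (Fin k))) (hqZ : qZ = (μ ⊗ₘ κ).snd)
    (xψ : EuclideanSpace ℝ (Fin k) → EuclideanSpace ℝ (Fin d)) (hxψ : Measurable xψ)
    (σ : ℝ) (hσ : 0 < σ)
    (hac : ∀ᵐ x ∂μ, κ x ≪ p)
    (hMI_fin : klDiv (μ ⊗ₘ κ) (μ.prod qZ) ≠ ⊤)
    (hrec_int : Integrable
      (fun q : EuclideanSpace ℝ (Fin d) × EuclideanSpace ℝ (Fin k) => ‖xψ q.2 - q.1‖ ^ 2)
      (μ ⊗ₘ κ))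
    (hlogf_int : Integrable (fun x => Real.log (f x)) μ)
    (hkl_fin : ∀ᵐ x ∂μ, klDiv (κ x) p ≠ ⊤)
    (hkl_int : Integrable (fun x => (klDiv (κ x) p).toReal) μ) :
    klDiv qZ p ≤
      (((1 / (2 * σ ^ 2)) * ∫ x, ∫ z, ‖xψ z - x‖ ^ 2 ∂(κ x) ∂μ
        + ((d : ℝ) / 2) * Real.log (2 * Real.pi * σ ^ 2)
        + ∫ x, Real.log (f x) ∂μ
        + ∫ x, (klDiv (κ x) p).toReal ∂μ : ℝ) : EReal) := by
  have hqZ_prob : IsProbabilityMeasure qZ := by rw [hqZ]; infer_instance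
  have hqZ_sf : SigmaFinite qZ := by infer_instance
  have hp_sf : SigmaFinite p := by infer_instance
  have hρ_sf : SFinite (μ ⊗ₘ κ) := by infer_instance
  have hm_sf : SigmaFinite (μ.prod qZ) := by infer_instance
  have hc2 : (0:ℝ) < 2*Real.pi*σ^2 := by positivity
  -- unfold mutual information finiteness
  have hMI : (μ ⊗ₘ κ) ≪ μ.prod qZ ∧
      Integrable (fun q => Real.log (((μ ⊗ₘ κ).rnDeriv (μ.prod qZ)) q).toReal) (μ ⊗ₘ κ) := by
    by_contra h
    rw [klDiv, if_neg h] at hMI_fin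
    exact hMI_fin rfl
  obtain ⟨hρm, hllr_int⟩ := hMI
  -- per-x facts from hkl_fin
  have hx_all : ∀ᵐ x ∂μ, (κ x) ≪ p ∧
      Integrable (fun z => Real.log (((κ x).rnDeriv p) z).toReal) (κ x) ∧
      (klDiv (κ x) p).toReal = ∫ z, Real.log (((κ x).rnDeriv p) z).toReal ∂(κ x) := by
    filter_upwards [hac, hkl_fin] with x h1 h2
    have h3 : Integrable (fun z => Real.log (((κ x).rnDeriv p) z).toReal) (κ x) := by
      by_contra h3
      rw [klDiv, if_neg (fun hh => h3 hh.2)] at h2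
      exact h2 rfl
    refine ⟨h1, h3, ?_⟩
    rw [klDiv, if_pos ⟨h1, h3⟩]
    simp
  -- kernel Radon-Nikodym derivative (jointly measurable version)
  set W : EuclideanSpace ℝ (Fin d) × EuclideanSpace ℝ (Fin k) → ℝ≥0∞ :=
    fun q => Kernel.rnDeriv κ (Kernel.const _ p) q.1 q.2 with hW_def
  have hW_meas : Measurable W := Kernel.measurable_rnDeriv κ (Kernel.const _ p)
  have hW_sec_p : ∀ x, (fun z => W (x, z)) =ᵐ[p] (κ x).rnDeriv p := by
    intro x
    have h2 : Kernel.rnDeriv κ (Kernel.const _ p) x =ᵐ[(Kernel.const _ p) x]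
        ((κ x).rnDeriv ((Kernel.const _ p) x)) := Kernel.rnDeriv_eq_rnDeriv_measure
    rw [Kernel.const_apply] at h2
    exact h2
  have hW_sec : ∀ᵐ x ∂μ, (fun z => W (x, z)) =ᵐ[κ x] (κ x).rnDeriv p := by
    filter_upwards [hac] with x h1
    exact h1.ae_le (hW_sec_p x)
  -- the joint measure is the product with density W
  have hρ_eq : (μ.prod p).withDensity W = μ ⊗ₘ κ := by
    ext s hs
    rw [withDensity_apply _ hs, Measure.compProd_apply hs, ← lintegral_indicator hs _,
      lintegral_prod _ (hW_meas.indicator hs).aemeasurable]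
    refine lintegral_congr_ae ?_
    filter_upwards [hac] with x h1
    calc ∫⁻ z, s.indicator W (x, z) ∂p
        = ∫⁻ z, (Prod.mk x ⁻¹' s).indicator (fun z => W (x, z)) z ∂p := by
          refine lintegral_congr fun z => ?_
          simp [Set.indicator_apply, Set.mem_preimage]
      _ = ∫⁻ z in Prod.mk x ⁻¹' s, W (x, z) ∂p := by
          rw [lintegral_indicator (measurable_prodMk_left hs) _]
      _ = ∫⁻ z in Prod.mk x ⁻¹' s, (κ x).rnDeriv p z ∂p := by
          refine lintegral_congr_ae (ae_restrict_of_ae ?_)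
          exact hW_sec_p x
      _ = κ x (Prod.mk x ⁻¹' s) := Measure.setLIntegral_rnDeriv h1 _
  -- absolute continuity of the aggregated posterior
  have hρmp : (μ ⊗ₘ κ) ≪ μ.prod p := by
    rw [← hρ_eq]; exact withDensity_absolutelyContinuous _ _
  have hqZp : qZ ≪ p := by
    rw [hqZ]
    have h2 := hρmp.map (f := Prod.snd) measurable_snd
    have h3 : (μ.prod p).map Prod.snd = p := by
      have := Measure.snd_prod (μ := μ) (ν := p)
      exact this
    rw [h3] at h2
    exact h2
  have hm_eq : (μ.prod p).withDensity (fun q => qZ.rnDeriv p q.2) = μ.prod qZ := by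
    ext s hs
    have hg2m : Measurable (fun q : EuclideanSpace ℝ (Fin d) × EuclideanSpace ℝ (Fin k)
        => qZ.rnDeriv p q.2) := (Measure.measurable_rnDeriv qZ p).comp measurable_snd
    rw [withDensity_apply _ hs, Measure.prod_apply hs, ← lintegral_indicator hs _,
      lintegral_prod _ ((hg2m.indicator hs)).aemeasurable]
    refine lintegral_congr fun x => ?_
    calc ∫⁻ z, s.indicator (fun q => qZ.rnDeriv p q.2) (x, z) ∂p
        = ∫⁻ z, (Prod.mk x ⁻¹' s).indicator (fun z => qZ.rnDeriv p z) z ∂p := by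
          refine lintegral_congr fun z => ?_
          simp [Set.indicator_apply, Set.mem_preimage]
      _ = ∫⁻ z in Prod.mk x ⁻¹' s, qZ.rnDeriv p z ∂p := by
          rw [lintegral_indicator (measurable_prodMk_left hs) _]
      _ = qZ (Prod.mk x ⁻¹' s) := Measure.setLIntegral_rnDeriv hqZp _
  have hmm' : μ.prod qZ ≪ μ.prod p := by
    rw [← hm_eq]; exact withDensity_absolutelyContinuous _ _
  have hρm' : (μ ⊗ₘ κ) ≪ μ.prod p := hρm.trans hmm'
  -- rnDeriv identities
  have hrd1 : (μ ⊗ₘ κ).rnDeriv (μ.prod p) =ᵐ[μ.prod p] W := by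
    rw [← hρ_eq]; exact Measure.rnDeriv_withDensity _ hW_meas
  have hrd2 : (μ.prod qZ).rnDeriv (μ.prod p) =ᵐ[μ.prod p] (fun q => qZ.rnDeriv p q.2) := by
    rw [← hm_eq]
    exact Measure.rnDeriv_withDensity _ ((Measure.measurable_rnDeriv qZ p).comp measurable_snd)
  have hchain : (μ ⊗ₘ κ).rnDeriv (μ.prod qZ) * (μ.prod qZ).rnDeriv (μ.prod p)
      =ᵐ[μ.prod p] (μ ⊗ₘ κ).rnDeriv (μ.prod p) := Measure.rnDeriv_mul_rnDeriv hρm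
  -- a.e.-ρ positivity and finiteness
  have hpos1 : ∀ᵐ q ∂(μ ⊗ₘ κ), 0 < (μ ⊗ₘ κ).rnDeriv (μ.prod qZ) q :=
    Measure.rnDeriv_pos hρm
  have hfin1 : ∀ᵐ q ∂(μ ⊗ₘ κ), (μ ⊗ₘ κ).rnDeriv (μ.prod qZ) q ≠ ⊤ :=
    hρm.ae_le (Measure.rnDeriv_ne_top _ _)
  have hae_snd : ∀ (P : EuclideanSpace ℝ (Fin k) → Prop), MeasurableSet {z | P z} →
      (∀ᵐ z ∂qZ, P z) → (∀ᵐ q ∂(μ ⊗ₘ κ), P q.2) := by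
    intro P hP hPq
    rw [hqZ] at hPq
    exact (MeasureTheory.ae_map_iff measurable_snd.aemeasurable hP).1 hPq
  have hpos2 : ∀ᵐ q ∂(μ ⊗ₘ κ), 0 < qZ.rnDeriv p q.2 := by
    refine hae_snd _ ?_ (Measure.rnDeriv_pos hqZp)
    exact measurableSet_lt measurable_const (Measure.measurable_rnDeriv qZ p)
  have hfin2 : ∀ᵐ q ∂(μ ⊗ₘ κ), qZ.rnDeriv p q.2 ≠ ⊤ := by
    refine hae_snd _ ?_ (hqZp.ae_le (Measure.rnDeriv_ne_top _ _))
    exact ((Measure.measurable_rnDeriv qZ p) (measurableSet_singleton ⊤)).compl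
  -- log decomposition a.e. ρ
  have hlog : ∀ᵐ q ∂(μ ⊗ₘ κ), Real.log (W q).toReal
      = Real.log (((μ ⊗ₘ κ).rnDeriv (μ.prod qZ)) q).toReal
        + Real.log ((qZ.rnDeriv p q.2).toReal) := by
    filter_upwards [hρm'.ae_le hrd1, hρm'.ae_le hchain, hρm'.ae_le hrd2, hpos1, hfin1,
      hpos2, hfin2] with q h1 h2 h3 h4 h5 h6 h7
    have e1 : W q = (μ ⊗ₘ κ).rnDeriv (μ.prod qZ) q * qZ.rnDeriv p q.2 := by
      rw [← h1, ← h2, Pi.mul_apply, h3]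
    rw [e1, ENNReal.toReal_mul,
      Real.log_mul (ENNReal.toReal_pos h4.ne' h5).ne' (ENNReal.toReal_pos h6.ne' h7).ne']
  -- integrability of L₀
  have hL0_meas : Measurable (fun q => Real.log (W q).toReal) :=
    hW_meas.ennreal_toReal.log
  have hL0_int : Integrable (fun q => Real.log (W q).toReal) (μ ⊗ₘ κ) := by
    refine ⟨hL0_meas.aestronglyMeasurable, ?_⟩
    have hmeas : Measurable (fun q => (‖Real.log (W q).toReal‖₊ : ℝ≥0∞)) :=
      hL0_meas.nnnorm.coe_nnreal_ennreal
    rw [HasFiniteIntegral]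
    change ∫⁻ q, (‖Real.log (W q).toReal‖₊ : ℝ≥0∞) ∂(μ ⊗ₘ κ) < ⊤
    rw [Measure.lintegral_compProd hmeas]
    have hbx : ∀ᵐ x ∂μ, ∫⁻ z, (‖Real.log (W (x, z)).toReal‖₊ : ℝ≥0∞) ∂κ x
        ≤ ENNReal.ofReal ((klDiv (κ x) p).toReal) + 3 := by
      filter_upwards [hx_all, hW_sec] with x hx hsec
      obtain ⟨h1, h2, h3⟩ := hx
      have e0 : ∫⁻ z, (‖Real.log (W (x, z)).toReal‖₊ : ℝ≥0∞) ∂κ x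
          = ∫⁻ z, (‖Real.log ((κ x).rnDeriv p z).toReal‖₊ : ℝ≥0∞) ∂κ x := by
        refine lintegral_congr_ae ?_
        filter_upwards [hsec] with z hz
        rw [hz]
      rw [e0]
      have e1 : ∫⁻ z, (‖Real.log ((κ x).rnDeriv p z).toReal‖₊ : ℝ≥0∞) ∂κ x
          ≤ ∫⁻ z, (ENNReal.ofReal (Real.log ((κ x).rnDeriv p z).toReal)
              + 2 * ENNReal.ofReal (-(Real.log ((κ x).rnDeriv p z).toReal))) ∂κ x := by
        refine lintegral_mono fun z => ?_
        set a := Real.log ((κ x).rnDeriv p z).toReal with ha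
        rw [← enorm_eq_nnnorm, Real.enorm_eq_ofReal_abs]
        rcases le_or_gt 0 a with h | h
        · rw [abs_of_nonneg h]; exact le_self_add
        · rw [abs_of_neg h]
          calc ENNReal.ofReal (-a) ≤ 2 * ENNReal.ofReal (-a) := by
                nth_rewrite 1 [← one_mul (ENNReal.ofReal (-a))]
                exact mul_le_mul_left (by norm_num) _
            _ ≤ _ := le_add_self
      have hmeas2 : Measurable fun z => ENNReal.ofReal (Real.log ((κ x).rnDeriv p z).toReal) :=
        (Measure.measurable_rnDeriv _ _).ennreal_toReal.log.ennreal_ofReal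
      rw [lintegral_add_left hmeas2] at e1
      rw [lintegral_const_mul 2 (by exact
        (Measure.measurable_rnDeriv _ _).ennreal_toReal.log.neg.ennreal_ofReal)] at e1
      have e2 := lintegral_ofReal_le_of_integrable (κ x) _ h2
      have e3 := negpart_llr_bound (κ x) p h1
      calc ∫⁻ z, (‖Real.log ((κ x).rnDeriv p z).toReal‖₊ : ℝ≥0∞) ∂κ x
          ≤ ∫⁻ z, ENNReal.ofReal (Real.log ((κ x).rnDeriv p z).toReal) ∂κ x
            + 2 * ∫⁻ z, ENNReal.ofReal (-(Real.log ((κ x).rnDeriv p z).toReal)) ∂κ x := e1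
        _ ≤ (ENNReal.ofReal (∫ z, Real.log ((κ x).rnDeriv p z).toReal ∂κ x)
            + ∫⁻ z, ENNReal.ofReal (-(Real.log ((κ x).rnDeriv p z).toReal)) ∂κ x)
            + 2 * ∫⁻ z, ENNReal.ofReal (-(Real.log ((κ x).rnDeriv p z).toReal)) ∂κ x := by
            exact add_le_add_left e2 _
        _ ≤ (ENNReal.ofReal (∫ z, Real.log ((κ x).rnDeriv p z).toReal ∂κ x) + 1) + 2 * 1 := by
            refine add_le_add (add_le_add_right e3 _) ?_
            exact mul_le_mul_right e3 _
        _ = ENNReal.ofReal ((klDiv (κ x) p).toReal) + 3 := by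
            rw [← h3]
            ring
    calc ∫⁻ x, ∫⁻ z, (‖Real.log (W (x, z)).toReal‖₊ : ℝ≥0∞) ∂κ x ∂μ
        ≤ ∫⁻ x, (ENNReal.ofReal ((klDiv (κ x) p).toReal) + 3) ∂μ := lintegral_mono_ae hbx
      _ = ∫⁻ x, ENNReal.ofReal ((klDiv (κ x) p).toReal) ∂μ + 3 := by
          rw [lintegral_add_right _ measurable_const, lintegral_const]
          simp
      _ < ⊤ := by
          refine ENNReal.add_lt_top.2 ⟨?_, by simp⟩
          refine lt_of_le_of_lt (lintegral_mono fun x => Real.ofReal_le_enorm _) hkl_int.2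
  have hL0_val : ∫ q, Real.log (W q).toReal ∂(μ ⊗ₘ κ)
      = ∫ x, (klDiv (κ x) p).toReal ∂μ := by
    rw [MeasureTheory.Measure.integral_compProd hL0_int]
    refine integral_congr_ae ?_
    filter_upwards [hx_all, hW_sec] with x hx hsec
    obtain ⟨h1, h2, h3⟩ := hx
    rw [h3]
    refine integral_congr_ae ?_
    filter_upwards [hsec] with z hz
    rw [hz]
  -- the aggregated posterior log-likelihood ratio
  set J : EuclideanSpace ℝ (Fin k) → ℝ := fun z => Real.log ((qZ.rnDeriv p z).toReal)
    with hJ_def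
  have hJ_meas : Measurable J := (Measure.measurable_rnDeriv qZ p).ennreal_toReal.log
  have hJsnd : (fun q : EuclideanSpace ℝ (Fin d) × EuclideanSpace ℝ (Fin k) => J q.2)
      =ᵐ[μ ⊗ₘ κ] fun q => Real.log (W q).toReal
        - Real.log (((μ ⊗ₘ κ).rnDeriv (μ.prod qZ)) q).toReal := by
    filter_upwards [hlog] with q hq
    rw [hJ_def]
    simp only []
    rw [hq]
    ring
  have hJsnd_int : Integrable
      (fun q : EuclideanSpace ℝ (Fin d) × EuclideanSpace ℝ (Fin k) => J q.2) (μ ⊗ₘ κ) :=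
    (hL0_int.sub hllr_int).congr hJsnd.symm
  have hJ_int : Integrable J qZ := by
    rw [hqZ]
    exact (integrable_map_measure hJ_meas.aestronglyMeasurable
      measurable_snd.aemeasurable).2 hJsnd_int
  have hJ_val : ∫ z, J z ∂qZ
      = ∫ q, Real.log (W q).toReal ∂(μ ⊗ₘ κ)
        - ∫ q, Real.log (((μ ⊗ₘ κ).rnDeriv (μ.prod qZ)) q).toReal ∂(μ ⊗ₘ κ) := by
    have h1 : ∫ z, J z ∂qZ = ∫ q, J q.2 ∂(μ ⊗ₘ κ) := by
      rw [hqZ]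
      exact integral_map measurable_snd.aemeasurable hJ_meas.aestronglyMeasurable
    rw [h1, integral_congr_ae hJsnd, integral_sub hL0_int hllr_int]
  -- Gibbs inequality part
  set G : EuclideanSpace ℝ (Fin d) × EuclideanSpace ℝ (Fin k) → ℝ :=
    fun q => -(‖xψ q.2 - q.1‖^2 / (2*σ^2)) - ((d:ℝ)/2) * Real.log (2*Real.pi*σ^2)
      - Real.log (f q.1) with hG_def
  have hG_meas : Measurable G := by
    apply Measurable.sub
    apply Measurable.sub
    · exact ((((hxψ.comp measurable_snd).sub measurable_fst).norm.pow
        measurable_const).div_const _).neg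
    · exact measurable_const
    · exact (hf_meas.comp measurable_fst).log
  have hfst_eq : (μ ⊗ₘ κ).map Prod.fst = μ := Measure.fst_compProd μ κ
  have hlogf_fst_int : Integrable
      (fun q : EuclideanSpace ℝ (Fin d) × EuclideanSpace ℝ (Fin k) => Real.log (f q.1))
      (μ ⊗ₘ κ) := by
    have h1 : Integrable (fun x => Real.log (f x)) ((μ ⊗ₘ κ).map Prod.fst) := by
      rw [hfst_eq]; exact hlogf_int
    exact (integrable_map_measure hf_meas.log.aestronglyMeasurable
      measurable_fst.aemeasurable).1 h1
  have hG_int : Integrable G (μ ⊗ₘ κ) := by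
    apply Integrable.sub
    apply Integrable.sub
    · exact (hrec_int.div_const _).neg
    · exact integrable_const _
    · exact hlogf_fst_int
  have hG_val : ∫ q, G q ∂(μ ⊗ₘ κ)
      = -((1 / (2 * σ ^ 2)) * ∫ x, ∫ z, ‖xψ z - x‖ ^ 2 ∂(κ x) ∂μ
          + ((d : ℝ) / 2) * Real.log (2 * Real.pi * σ ^ 2)
          + ∫ x, Real.log (f x) ∂μ) := by
    have ia : Integrable (fun q : EuclideanSpace ℝ (Fin d) × EuclideanSpace ℝ (Fin k) =>
        -(‖xψ q.2 - q.1‖^2 / (2*σ^2)) - ((d:ℝ)/2) * Real.log (2*Real.pi*σ^2)) (μ ⊗ₘ κ) := by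
      exact (hrec_int.div_const _).neg.sub (integrable_const _)
    have ib : Integrable (fun q : EuclideanSpace ℝ (Fin d) × EuclideanSpace ℝ (Fin k) =>
        -(‖xψ q.2 - q.1‖^2 / (2*σ^2))) (μ ⊗ₘ κ) := by
      exact (hrec_int.div_const _).neg
    rw [hG_def]
    simp only []
    rw [integral_sub ia hlogf_fst_int, integral_sub ib (integrable_const _), integral_neg,
      integral_const]
    have e1 : ∫ q : EuclideanSpace ℝ (Fin d) × EuclideanSpace ℝ (Fin k),
        ‖xψ q.2 - q.1‖ ^ 2 / (2*σ^2) ∂(μ ⊗ₘ κ)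
        = (∫ x, ∫ z, ‖xψ z - x‖ ^ 2 ∂(κ x) ∂μ) / (2*σ^2) := by
      rw [integral_div, MeasureTheory.Measure.integral_compProd hrec_int]
    have e2 : ∫ q : EuclideanSpace ℝ (Fin d) × EuclideanSpace ℝ (Fin k),
        Real.log (f q.1) ∂(μ ⊗ₘ κ) = ∫ x, Real.log (f x) ∂μ := by
      have h := integral_map (μ := μ ⊗ₘ κ) (φ := Prod.fst) measurable_fst.aemeasurable
        (f := fun x => Real.log (f x)) hf_meas.log.aestronglyMeasurable
      rw [hfst_eq] at h
      exact h.symm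
    rw [e1, e2]
    simp [measure_univ]
    ring
  have hGibbs : ∫ q, G q ∂(μ ⊗ₘ κ)
      ≤ ∫ q, Real.log (((μ ⊗ₘ κ).rnDeriv (μ.prod qZ)) q).toReal ∂(μ ⊗ₘ κ) := by
    set ψ : EuclideanSpace ℝ (Fin d) × EuclideanSpace ℝ (Fin k) → ℝ :=
      fun q => Real.exp (G q) / (((μ ⊗ₘ κ).rnDeriv (μ.prod qZ)) q).toReal with hψ_def
    have hψ_meas : Measurable ψ :=
      hG_meas.exp.div (Measure.measurable_rnDeriv _ _).ennreal_toReal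
    have hψ_nonneg : ∀ q, 0 ≤ ψ q := fun q =>
      div_nonneg (Real.exp_nonneg _) ENNReal.toReal_nonneg
    have hpoint : ∀ᵐ q ∂(μ ⊗ₘ κ), 1 - ψ q
        ≤ Real.log (((μ ⊗ₘ κ).rnDeriv (μ.prod qZ)) q).toReal - G q := by
      filter_upwards [hpos1, hfin1] with q h4 h5
      have hR_pos : 0 < (((μ ⊗ₘ κ).rnDeriv (μ.prod qZ)) q).toReal :=
        ENNReal.toReal_pos h4.ne' h5
      have hψ_pos : 0 < ψ q := div_pos (Real.exp_pos _) hR_pos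
      have hlogψ : Real.log (ψ q)
          = G q - Real.log (((μ ⊗ₘ κ).rnDeriv (μ.prod qZ)) q).toReal := by
        rw [hψ_def]
        simp only []
        rw [Real.log_div (Real.exp_ne_zero _) hR_pos.ne', Real.log_exp]
      have hb := Real.log_le_sub_one_of_pos hψ_pos
      linarith
    have hψ_lint : ∫⁻ q, ENNReal.ofReal (ψ q) ∂(μ ⊗ₘ κ) ≤ 1 := by
      have hρden : (μ.prod qZ).withDensity ((μ ⊗ₘ κ).rnDeriv (μ.prod qZ)) = μ ⊗ₘ κ :=
        Measure.withDensity_rnDeriv_eq _ _ hρm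
      conv_lhs => rw [← hρden]
      rw [lintegral_withDensity_eq_lintegral_mul _ (Measure.measurable_rnDeriv _ _)
        hψ_meas.ennreal_ofReal]
      calc ∫⁻ q, ((μ ⊗ₘ κ).rnDeriv (μ.prod qZ)
              * fun q => ENNReal.ofReal (ψ q)) q ∂(μ.prod qZ)
          ≤ ∫⁻ q, ENNReal.ofReal (Real.exp (G q)) ∂(μ.prod qZ) := by
            refine lintegral_mono_ae ?_
            filter_upwards [Measure.rnDeriv_ne_top (μ ⊗ₘ κ) (μ.prod qZ)] with q hq
            simp only [Pi.mul_apply]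
            rw [show (μ ⊗ₘ κ).rnDeriv (μ.prod qZ) q
                = ENNReal.ofReal (((μ ⊗ₘ κ).rnDeriv (μ.prod qZ) q).toReal) from
                (ENNReal.ofReal_toReal hq).symm]
            rw [← ENNReal.ofReal_mul ENNReal.toReal_nonneg]
            refine ENNReal.ofReal_le_ofReal ?_
            rw [hψ_def]
            simp only []
            set r := (((μ ⊗ₘ κ).rnDeriv (μ.prod qZ)) q).toReal with hr
            rcases eq_or_ne r 0 with h | h
            · rw [h]
              simp [Real.exp_nonneg]
            · rw [mul_comm, div_mul_cancel₀ _ h]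
        _ = 1 := by
            rw [lintegral_prod_symm _ hG_meas.exp.ennreal_ofReal.aemeasurable]
            have hinner : ∀ z, ∫⁻ x, ENNReal.ofReal (Real.exp (G (x, z))) ∂μ = 1 := by
              intro z
              have hGz_meas : Measurable fun x => ENNReal.ofReal (Real.exp (G (x, z))) :=
                ((hG_meas.comp (measurable_id.prodMk measurable_const)).exp).ennreal_ofReal
              rw [hμ, lintegral_withDensity_eq_lintegral_mul _ hf_meas.ennreal_ofReal hGz_meas]
              have hpt : ∀ x, (ENNReal.ofReal (f x)) * ENNReal.ofReal (Real.exp (G (x, z)))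
                  = ENNReal.ofReal (Real.exp (-(‖xψ z - x‖^2/(2*σ^2)))
                      * (2*Real.pi*σ^2) ^ (-((d:ℝ))/2)) := by
                intro x
                rw [← ENNReal.ofReal_mul (hf_pos x).le]
                congr 1
                have hexp : Real.exp (G (x, z))
                    = Real.exp (-(‖xψ z - x‖^2/(2*σ^2)))
                      * (2*Real.pi*σ^2) ^ (-((d:ℝ))/2) * (f x)⁻¹ := by
                  rw [hG_def]
                  simp only []
                  rw [sub_eq_add_neg, sub_eq_add_neg, Real.exp_add, Real.exp_add,
                    Real.exp_neg (Real.log (f x)), Real.exp_log (hf_pos x)]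
                  congr 2
                  rw [Real.rpow_def_of_pos hc2]
                  congr 1
                  ring
                rw [hexp]
                field_simp
                exact div_self (ne_of_gt (hf_pos x))
              calc ∫⁻ x, (fun x => ENNReal.ofReal (f x)) x
                    * (fun x => ENNReal.ofReal (Real.exp (G (x, z)))) x ∂volume
                  = ∫⁻ x, ENNReal.ofReal (Real.exp (-(‖xψ z - x‖^2/(2*σ^2)))
                      * (2*Real.pi*σ^2) ^ (-((d:ℝ))/2)) ∂volume := by
                    refine lintegral_congr fun x => ?_
                    exact hpt x
                _ = ENNReal.ofReal (∫ x : EuclideanSpace ℝ (Fin d),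
                      Real.exp (-(‖xψ z - x‖^2/(2*σ^2)))
                        * (2*Real.pi*σ^2) ^ (-((d:ℝ))/2) ∂volume) := by
                    rw [← ofReal_integral_eq_lintegral_ofReal
                      ((gauss_integrable d σ hσ (xψ z)).mul_const _)
                      (Filter.Eventually.of_forall fun x => by positivity)]
                _ = 1 := by
                    rw [integral_mul_const, gauss_integral d σ hσ (xψ z),
                      ← Real.rpow_add hc2,
                      show (d:ℝ)/2 + -((d:ℝ))/2 = 0 by ring, Real.rpow_zero,
                      ENNReal.ofReal_one]
            calc ∫⁻ z, ∫⁻ x, ENNReal.ofReal (Real.exp (G (x, z))) ∂μ ∂qZ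
                = ∫⁻ z, 1 ∂qZ := lintegral_congr hinner
              _ = 1 := by simp
    have hψ_int : Integrable ψ (μ ⊗ₘ κ) := by
      refine ⟨hψ_meas.aestronglyMeasurable, ?_⟩
      rw [HasFiniteIntegral]
      have e : ∫⁻ q, ‖ψ q‖ₑ ∂(μ ⊗ₘ κ) = ∫⁻ q, ENNReal.ofReal (ψ q) ∂(μ ⊗ₘ κ) := by
        refine lintegral_congr fun q => ?_
        rw [Real.enorm_eq_ofReal_abs, abs_of_nonneg (hψ_nonneg q)]
      rw [e]
      exact lt_of_le_of_lt hψ_lint (by norm_num)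
    have hψ_le_one : ∫ q, ψ q ∂(μ ⊗ₘ κ) ≤ 1 := by
      rw [integral_eq_lintegral_of_nonneg_ae (Filter.Eventually.of_forall hψ_nonneg)
        hψ_meas.aestronglyMeasurable]
      have h1 : (∫⁻ q, ENNReal.ofReal (ψ q) ∂(μ ⊗ₘ κ)).toReal ≤ (1 : ℝ≥0∞).toReal :=
        ENNReal.toReal_mono (by norm_num) hψ_lint
      simpa using h1
    have int1 : Integrable (fun q : EuclideanSpace ℝ (Fin d) × EuclideanSpace ℝ (Fin k) =>
        1 - ψ q) (μ ⊗ₘ κ) := by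
      exact (integrable_const (1:ℝ)).sub hψ_int
    have int2 : Integrable (fun q : EuclideanSpace ℝ (Fin d) × EuclideanSpace ℝ (Fin k) =>
        Real.log (((μ ⊗ₘ κ).rnDeriv (μ.prod qZ)) q).toReal - G q) (μ ⊗ₘ κ) := by
      exact hllr_int.sub hG_int
    have hmono := integral_mono_ae int1 int2 hpoint
    rw [integral_sub (integrable_const _) hψ_int, integral_sub hllr_int hG_int,
      integral_const] at hmono
    simp only [measure_univ, ENNReal.toReal_one, smul_eq_mul, one_mul, probReal_univ, mul_one] at hmono
    linarith
  -- conclusion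
  have hkl_eq : klDiv qZ p = ((∫ z, J z ∂qZ : ℝ) : EReal) := by
    rw [klDiv, if_pos ⟨hqZp, hJ_int⟩]
  rw [hkl_eq, EReal.coe_le_coe_iff, hJ_val, hL0_val]
  have hg2 := hGibbs
  rw [hG_val] at hg2
  linarith
end
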